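/- Let G be a graph with vertices listed in an always-connected order v_1, …, v_n, and let L be the layer function of the ordering. Then both the set E of vertices with even layer number and the set O ∪ {v_1}, where O is the set of vertices with odd layer number, satisfy: for every i, their intersection with {v_1, …, v_i} is a dominating set of G_i. Consequently, G has an incremental dominating set of size at most ⌊n/2⌋ + 1. -/

import Mathlib

/-- `D` is a dominating set of the prefix graph `G_i` (induced on the first `i`
vertices `v_1, …, v_i`, i.e. the vertices of `Fin n` with value `< i`);
here `D` is assumed to consist of vertices of the prefix, so that adjacency
in `G_i` coincides with adjacency in `G`. -/
def PrefixDom {n : ℕ} (G : SimpleGraph (Fin n)) (i : ℕ) (D : Finset (Fin n)) : Prop :=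
  ∀ v : Fin n, v.val < i → v ∈ D ∨ ∃ u ∈ D, G.Adj u v

/-- The natural ordering `v_1, …, v_n` of `Fin n` is always-connected:
every prefix graph `G_i` (for `1 ≤ i ≤ n`) is connected. -/
def AlwaysConnected {n : ℕ} (G : SimpleGraph (Fin n)) : Prop :=
  ∀ i : ℕ, 1 ≤ i → i ≤ n → (G.induce {v : Fin n | v.val < i}).Connected

/-- `D 1 ⊆ D 2 ⊆ ⋯ ⊆ D n` is a chain in which each `D i` is a subset of
`{v_1, …, v_i}` that is a dominating set of the prefix graph `G_i`. -/
def IncDomChain {n : ℕ} (G : SimpleGraph (Fin n)) (D : ℕ → Finset (Fin n)) : Prop :=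
  (∀ i : ℕ, 1 ≤ i → i < n → D i ⊆ D (i + 1)) ∧
  (∀ i : ℕ, 1 ≤ i → i ≤ n → (∀ v ∈ D i, v.val < i) ∧ PrefixDom G i (D i))

/-- `R` is an incremental dominating set of `G`: the final set `D n` of some
incremental dominating chain. -/
def IsIncDomSet {n : ℕ} (G : SimpleGraph (Fin n)) (R : Finset (Fin n)) : Prop :=
  ∃ D : ℕ → Finset (Fin n), IncDomChain G D ∧ R = D n

/-- An incremental connected dominating chain: additionally, each `D i`
induces a connected subgraph. -/
def IncConnDomChain {n : ℕ} (G : SimpleGraph (Fin n)) (D : ℕ → Finset (Fin n)) : Prop :=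
  IncDomChain G D ∧
    ∀ i : ℕ, 1 ≤ i → i ≤ n → (G.induce (↑(D i) : Set (Fin n))).Connected

/-- `R` is an incremental connected dominating set of `G`. -/
def IsIncConnDomSet {n : ℕ} (G : SimpleGraph (Fin n)) (R : Finset (Fin n)) : Prop :=
  ∃ D : ℕ → Finset (Fin n), IncConnDomChain G D ∧ R = D n

/-- `L` is the layer function of the (always-connected) ordering of `G`:
`L v₁ = 0` and, for each later vertex `v`,
`L v = 1 + min { L u : u earlier than v and adjacent to v }`. -/
def IsLayerFn {n : ℕ} (G : SimpleGraph (Fin n)) (hn : 1 ≤ n) (L : Fin n → ℕ) : Prop :=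
  L (⟨0, hn⟩ : Fin n) = 0 ∧
  ∀ v : Fin n, 0 < v.val →
    L v = 1 + sInf (L '' {u : Fin n | u.val < v.val ∧ G.Adj u v})

/-- Let `G` be presented in an always-connected order with layer
function `L`. Then both the set of vertices with even layer number and the set of
vertices with odd layer number together with `v_1` dominate every prefix graph
`G_i` (after intersecting with `{v_1, …, v_i}`). Consequently, `G` has an
incremental dominating set of size at most `⌊n/2⌋ + 1`. -/
lemma walk_fst_adj' {V : Type*} {W : SimpleGraph V} {a b : V} (p : W.Walk a b) (h : a ≠ b) :
    ∃ c, W.Adj a c := by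
  cases p with
  | nil => exact absurd rfl h
  | cons h' _ => exact ⟨_, h'⟩

lemma exists_earlier_nbr' {n : ℕ} (G : SimpleGraph (Fin n))
    (hconn : AlwaysConnected G) (v : Fin n) (hv : 0 < v.val) :
    ∃ u : Fin n, u.val < v.val ∧ G.Adj u v := by
  have hn : 1 ≤ n := le_trans (Nat.succ_le_of_lt hv) (le_of_lt v.isLt)
  have hc := hconn (v.val + 1) (by omega) v.isLt
  have hvmem : v ∈ {w : Fin n | w.val < v.val + 1} := by simp
  have h0mem : (⟨0, hn⟩ : Fin n) ∈ {w : Fin n | w.val < v.val + 1} := by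
    show (0 : ℕ) < v.val + 1; omega
  obtain ⟨p⟩ := hc.preconnected ⟨v, hvmem⟩ ⟨⟨0, hn⟩, h0mem⟩
  have hne : (⟨v, hvmem⟩ : {w : Fin n | w.val < v.val + 1}) ≠ ⟨⟨0, hn⟩, h0mem⟩ := by
    intro h
    have := congrArg (fun x => (Subtype.val x).val) h
    simp at this
    omega
  obtain ⟨c, hc'⟩ := walk_fst_adj' p hne
  refine ⟨c.val, ?_, hc'.symm⟩
  have hw : (c : Fin n).val < v.val + 1 := c.2
  have hne2 : ((c : Fin n) : Fin n).val ≠ v.val :=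
    fun e => (hc'.ne.symm) (Subtype.ext (Fin.ext e).symm).symm
  omega

lemma exists_step' {n : ℕ} (hn : 1 ≤ n) (G : SimpleGraph (Fin n))
    (hconn : AlwaysConnected G) (L : Fin n → ℕ) (hL : IsLayerFn G hn L)
    (v : Fin n) (hv : 0 < v.val) :
    ∃ u : Fin n, u.val < v.val ∧ G.Adj u v ∧ L v = L u + 1 := by
  obtain ⟨u0, hu0, hadj0⟩ := exists_earlier_nbr' G hconn v hv
  have hne : (L '' {u : Fin n | u.val < v.val ∧ G.Adj u v}).Nonempty :=
    ⟨L u0, ⟨u0, ⟨hu0, hadj0⟩, rfl⟩⟩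
  obtain ⟨u, hu, huL⟩ := Nat.sInf_mem hne
  exact ⟨u, hu.1, hu.2, by rw [hL.2 v hv, huL]; omega⟩

lemma mk_inc' {n : ℕ} (G : SimpleGraph (Fin n)) (P : Fin n → Prop) [DecidablePred P]
    (hdom : ∀ i : ℕ, 1 ≤ i → i ≤ n →
      PrefixDom G i (Finset.univ.filter (fun v => P v ∧ v.val < i))) :
    IsIncDomSet G (Finset.univ.filter (fun v => P v ∧ v.val < n)) := by
  refine ⟨fun i => Finset.univ.filter (fun v => P v ∧ v.val < i), ⟨?_, ?_⟩, rfl⟩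
  · intro i _ _ v hv
    simp only [Finset.mem_filter] at *
    exact ⟨hv.1, hv.2.1, by omega⟩
  · intro i hi1 hin
    refine ⟨fun v hv => ?_, hdom i hi1 hin⟩
    simp only [Finset.mem_filter] at hv
    exact hv.2.2

theorem layers_inc_dominating {n : ℕ} (hn : 1 ≤ n) (G : SimpleGraph (Fin n))
    (hconn : AlwaysConnected G) (L : Fin n → ℕ) (hL : IsLayerFn G hn L) :
    (∀ i : ℕ, 1 ≤ i → i ≤ n →
      PrefixDom G i (Finset.univ.filter (fun v => Even (L v) ∧ v.val < i)) ∧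
      PrefixDom G i (Finset.univ.filter
        (fun v => (Odd (L v) ∨ v = (⟨0, hn⟩ : Fin n)) ∧ v.val < i))) ∧
    ∃ R : Finset (Fin n), IsIncDomSet G R ∧ R.card ≤ n / 2 + 1 := by
  have key := exists_step' hn G hconn L hL
  have hv0even : Even (L (⟨0, hn⟩ : Fin n)) := by rw [hL.1]; exact Even.zero
  have domE : ∀ i : ℕ, 1 ≤ i → i ≤ n →
      PrefixDom G i (Finset.univ.filter (fun v => Even (L v) ∧ v.val < i)) := by
    intro i hi1 hin v hvi
    by_cases he : Even (L v)
    · exact Or.inl (by simp [he, hvi])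
    · have hv0 : 0 < v.val := by
        rcases Nat.eq_zero_or_pos v.val with h0 | h
        · have hveq : v = (⟨0, hn⟩ : Fin n) := Fin.ext h0
          exact absurd (hveq ▸ hv0even) he
        · exact h
      obtain ⟨u, hu, hadj, hstep⟩ := key v hv0
      have heu : Even (L u) := by
        have hov : L v % 2 = 1 := Nat.odd_iff.1 (Nat.odd_iff.2 (Nat.not_even_iff.1 he))
        rw [Nat.even_iff]
        omega
      exact Or.inr ⟨u, by simp only [Finset.mem_filter]; exact ⟨Finset.mem_univ u, heu, by omega⟩, hadj⟩
  have domO : ∀ i : ℕ, 1 ≤ i → i ≤ n →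
      PrefixDom G i (Finset.univ.filter
        (fun v => (Odd (L v) ∨ v = (⟨0, hn⟩ : Fin n)) ∧ v.val < i)) := by
    intro i hi1 hin v hvi
    by_cases ho : Odd (L v) ∨ v = (⟨0, hn⟩ : Fin n)
    · exact Or.inl (by simp only [Finset.mem_filter]; exact ⟨Finset.mem_univ v, ho, hvi⟩)
    · push_neg at ho
      have hv0 : 0 < v.val := by
        rcases Nat.eq_zero_or_pos v.val with h0 | h
        · exact absurd (Fin.ext h0 : v = (⟨0, hn⟩ : Fin n)) ho.2
        · exact h
      obtain ⟨u, hu, hadj, hstep⟩ := key v hv0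
      have hou : Odd (L u) := by
        have hev : Even (L v) := (Nat.even_or_odd (L v)).resolve_right ho.1
        rw [Nat.even_iff] at hev
        exact Nat.odd_iff.2 (by omega)
      exact Or.inr ⟨u, by simp only [Finset.mem_filter]; exact ⟨Finset.mem_univ u, Or.inl hou, by omega⟩, hadj⟩
  refine ⟨fun i h1 h2 => ⟨domE i h1 h2, domO i h1 h2⟩, ?_⟩
  set E : Finset (Fin n) := Finset.univ.filter (fun v => Even (L v)) with hE
  set O : Finset (Fin n) :=
    Finset.univ.filter (fun v => Odd (L v) ∨ v = (⟨0, hn⟩ : Fin n)) with hO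
  have hunion : E ∪ O = Finset.univ := by
    ext v
    simp only [hE, hO, Finset.mem_union, Finset.mem_filter, Finset.mem_univ, true_and, iff_true]
    rcases Nat.even_or_odd (L v) with h | h
    · exact Or.inl h
    · exact Or.inr (Or.inl h)
  have hinter : E ∩ O = {(⟨0, hn⟩ : Fin n)} := by
    ext v
    simp only [hE, hO, Finset.mem_inter, Finset.mem_filter, Finset.mem_univ, true_and,
      Finset.mem_singleton]
    constructor
    · rintro ⟨he, ho | h0⟩
      · rw [Nat.even_iff] at he; rw [Nat.odd_iff] at ho; omega
      · exact h0
    · rintro rfl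
      exact ⟨hv0even, Or.inr rfl⟩
  have hcard : E.card + O.card = n + 1 := by
    have := Finset.card_union_add_card_inter E O
    rw [hunion, hinter] at this
    simpa using this.symm
  by_cases hEc : E.card ≤ n / 2 + 1
  · refine ⟨Finset.univ.filter (fun v => Even (L v) ∧ v.val < n),
      mk_inc' G (fun v => Even (L v)) domE, ?_⟩
    calc (Finset.univ.filter (fun v => Even (L v) ∧ v.val < n)).card
        ≤ E.card := Finset.card_le_card (fun v hv => by
          simp only [hE, Finset.mem_filter] at *; exact ⟨hv.1, hv.2.1⟩)
      _ ≤ n / 2 + 1 := hEc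
  · refine ⟨Finset.univ.filter
        (fun v => (Odd (L v) ∨ v = (⟨0, hn⟩ : Fin n)) ∧ v.val < n),
      mk_inc' G (fun v => Odd (L v) ∨ v = (⟨0, hn⟩ : Fin n)) domO, ?_⟩
    calc (Finset.univ.filter
          (fun v => (Odd (L v) ∨ v = (⟨0, hn⟩ : Fin n)) ∧ v.val < n)).card
        ≤ O.card := Finset.card_le_card (fun v hv => by
          simp only [hO, Finset.mem_filter] at *; exact ⟨hv.1, hv.2.1⟩)
      _ ≤ n / 2 + 1 := by omega
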